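/- Suppose h : ℝ → ℝ has property (L), and let U = {x ∈ ℝ : h(x) > 0}. Then there exist a function g : U → ℝ which is C^∞ on U and absolute constants C_0 ≥ 1 and (C_j)_{j≥1}, all independent of h, such that C_0^{−1} h(x) ≤ g(x) ≤ C_0 h(x) for all x ∈ U and |g^{(j)}(x)| ≤ C_j (g(x))^{1−j} for all x ∈ U and every integer j ≥ 1. -/

import Mathlib

open MeasureTheory Real Set
open scoped ENNReal NNReal Topology Classical

noncomputable section

/-- A continuous nonnegative `h : ℝ → ℝ` has property (L) if for every bounded interval `J`,
either `sup_J h ≤ 2 inf_J h` or `sup_J h < 2|J|`. -/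
def PropertyL (h : ℝ → ℝ) : Prop :=
  Continuous h ∧ (∀ x, 0 ≤ h x) ∧
    ∀ a b : ℝ, a ≤ b →
      sSup (h '' Set.Icc a b) ≤ 2 * sInf (h '' Set.Icc a b) ∨
        sSup (h '' Set.Icc a b) < 2 * (b - a)

namespace SmoothProp

lemma doubling {h : ℝ → ℝ} (hL : PropertyL h) {x y : ℝ} (hx : 0 < h x)
    (hxy : |x - y| ≤ h x / 4) : h x ≤ 2 * h y := by
  obtain ⟨hc, hnn, hd⟩ := hL
  set a := min x y with ha
  set b := max x y with hb
  have hab : a ≤ b := min_le_max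
  have hxm : x ∈ Icc a b := ⟨min_le_left _ _, le_max_left _ _⟩
  have hym : y ∈ Icc a b := ⟨min_le_right _ _, le_max_right _ _⟩
  have hcomp : IsCompact (h '' Icc a b) := (isCompact_Icc).image hc
  have hbddA : BddAbove (h '' Icc a b) := hcomp.bddAbove
  have hbddB : BddBelow (h '' Icc a b) := hcomp.bddBelow
  have hsx : h x ≤ sSup (h '' Icc a b) := le_csSup hbddA ⟨x, hxm, rfl⟩
  have hiy : sInf (h '' Icc a b) ≤ h y := csInf_le hbddB ⟨y, hym, rfl⟩
  rcases hd a b hab with H | H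
  · linarith
  · exfalso
    have hba : b - a = |x - y| := by rw [abs_sub_comm]; exact max_sub_min_eq_abs x y
    have : h x < 2 * (h x / 4) := by
      calc h x ≤ sSup (h '' Icc a b) := hsx
        _ < 2 * (b - a) := H
        _ ≤ 2 * (h x / 4) := by rw [hba]; linarith
    linarith

/-- infimal convolution regularization -/
def dd (h : ℝ → ℝ) (x : ℝ) : ℝ := sInf (Set.range fun y => h y + 8 * |x - y|)

variable {h : ℝ → ℝ}

lemma dd_bddBelow (hnn : ∀ y, 0 ≤ h y) (x : ℝ) :
    BddBelow (Set.range fun y => h y + 8 * |x - y|) := by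
  refine ⟨0, ?_⟩
  rintro _ ⟨y, rfl⟩
  have := hnn y
  have : (0:ℝ) ≤ 8 * |x - y| := by positivity
  dsimp
  linarith [hnn y]

lemma dd_nonneg (hnn : ∀ y, 0 ≤ h y) (x : ℝ) : 0 ≤ dd h x :=
  le_csInf (Set.range_nonempty _) (by rintro _ ⟨y, rfl⟩; have := hnn y; positivity)

lemma dd_le_self (hnn : ∀ y, 0 ≤ h y) (x : ℝ) : dd h x ≤ h x := by
  have : h x + 8 * |x - x| = h x := by simp
  calc dd h x ≤ h x + 8 * |x - x| := csInf_le (dd_bddBelow hnn x) ⟨x, rfl⟩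
    _ = h x := this

lemma dd_lip (hnn : ∀ y, 0 ≤ h y) (x x' : ℝ) : dd h x ≤ dd h x' + 8 * |x - x'| := by
  have : dd h x - 8 * |x - x'| ≤ dd h x' := by
    apply le_csInf (Set.range_nonempty _)
    rintro _ ⟨y, rfl⟩
    have h1 : dd h x ≤ h y + 8 * |x - y| := csInf_le (dd_bddBelow hnn x) ⟨y, rfl⟩
    have h2 : |x - y| ≤ |x - x'| + |x' - y| := abs_sub_le x x' y
    dsimp
    linarith
  linarith

lemma dd_ge_half (hL : PropertyL h) {x : ℝ} (hx : 0 < h x) : h x / 2 ≤ dd h x := by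
  apply le_csInf (Set.range_nonempty _)
  rintro _ ⟨y, rfl⟩
  dsimp
  rcases le_or_gt (|x - y|) (h x / 4) with hc | hc
  · have := doubling hL hx hc
    have : (0:ℝ) ≤ 8 * |x - y| := by positivity
    linarith [doubling hL hx hc]
  · have := hL.2.1 y
    nlinarith [abs_nonneg (x - y)]

lemma dd_continuous (hnn : ∀ y, 0 ≤ h y) : Continuous (dd h) := by
  have : LipschitzWith 8 (dd h) := by
    apply LipschitzWith.of_dist_le_mul
    intro x y
    have h1 := dd_lip hnn x y
    have h2 := dd_lip hnn y x
    rw [Real.dist_eq, Real.dist_eq]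
    rw [abs_sub_comm y x] at h2
    rw [abs_le]
    constructor <;> [skip; skip] <;> push_cast <;> linarith [abs_sub_comm x y]
  exact this.continuous

end SmoothProp

namespace SmoothProp

lemma abs_im_pow_le (w : ℂ) : ∀ n : ℕ,
    |(w ^ (n+1)).im| ≤ (n+1) * ‖w‖ ^ n * |w.im| := by
  intro n
  induction n with
  | zero => simp
  | succ n ih =>
    have hmul : (w ^ (n+2)).im = (w ^ (n+1)).re * w.im + (w ^ (n+1)).im * w.re := by
      rw [pow_succ, Complex.mul_im]
    rw [hmul]
    have h1 : |(w ^ (n+1)).re| ≤ ‖w‖ ^ (n+1) := by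
      calc |(w ^ (n+1)).re| ≤ ‖w ^ (n+1)‖ := Complex.abs_re_le_norm _
        _ = ‖w‖ ^ (n+1) := by rw [norm_pow]
    have h2 : |w.re| ≤ ‖w‖ := Complex.abs_re_le_norm _
    have h3 : |w.im| ≤ ‖w‖ := Complex.abs_im_le_norm _
    have habs : (0:ℝ) ≤ ‖w‖ := norm_nonneg _
    calc |(w ^ (n+1)).re * w.im + (w ^ (n+1)).im * w.re|
        ≤ |(w ^ (n+1)).re * w.im| + |(w ^ (n+1)).im * w.re| := abs_add_le _ _
      _ = |(w ^ (n+1)).re| * |w.im| + |(w ^ (n+1)).im| * |w.re| := by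
          rw [abs_mul, abs_mul]
      _ ≤ ‖w‖ ^ (n+1) * |w.im|
          + ((n+1) * ‖w‖ ^ n * |w.im|) * ‖w‖ := by
          gcongr
      _ = (n+1+1) * ‖w‖ ^ (n+1) * |w.im| := by ring
      _ = (↑(n+1)+1) * ‖w‖ ^ (n+1) * |w.im| := by push_cast; ring

/-- kernel: the `j`-th `x`-derivative of `y ↦ ((x-y)^2 + d y ^ 2)⁻¹`. -/
def Kk (d : ℝ → ℝ) (j : ℕ) (x y : ℝ) : ℝ :=
  if d y = 0 then (-1 : ℝ)^j * (j+1).factorial * (((x - y) ^ (j+2))⁻¹)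
  else (-1 : ℝ)^j * (j).factorial *
    (((((x - y : ℝ) : ℂ) - (d y : ℝ) * Complex.I)⁻¹) ^ (j+1)).im / d y

lemma Kk_zero (d : ℝ → ℝ) (x y : ℝ) : Kk d 0 x y = ((x - y)^2 + d y^2)⁻¹ := by
  unfold Kk
  split_ifs with hdy
  · simp [hdy]
  · have hz : (((x - y : ℝ) : ℂ) - (d y : ℝ) * Complex.I)⁻¹.im
        = d y / ((x - y)^2 + d y^2) := by
      rw [Complex.inv_im]
      have hre : (((x - y : ℝ) : ℂ) - (d y : ℝ) * Complex.I).re = x - y := by simp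
      have him : (((x - y : ℝ) : ℂ) - (d y : ℝ) * Complex.I).im = -(d y) := by simp
      rw [Complex.normSq_apply, hre, him]
      ring_nf
    rw [show (0:ℕ)+1 = 1 from rfl, pow_one, hz]
    simp only [Nat.factorial_zero, pow_zero, Nat.cast_one]
    field_simp

end SmoothProp

namespace SmoothProp

lemma Kk_abs_le (d : ℝ → ℝ) (hd0 : ∀ y, 0 ≤ d y) (j : ℕ) (x y : ℝ) :
    |Kk d j x y| ≤ (j+1).factorial * ((Real.sqrt ((x - y)^2 + d y^2)) ^ (j+2))⁻¹ := by
  unfold Kk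
  split_ifs with hdy
  · have hs : Real.sqrt ((x - y)^2 + d y^2) = |x - y| := by
      rw [hdy]; simp [Real.sqrt_sq_eq_abs]
    rw [hs, abs_mul, abs_mul, abs_pow, abs_neg, abs_one, one_pow, one_mul, abs_inv, abs_pow]
    rw [Nat.abs_cast]
  · have hdy' : 0 < d y := lt_of_le_of_ne (hd0 y) (Ne.symm hdy)
    set z : ℂ := ((x - y : ℝ) : ℂ) - (d y : ℝ) * Complex.I with hzdef
    have hzre : z.re = x - y := by simp [hzdef]
    have hzim : z.im = -(d y) := by simp [hzdef]
    have habs2 : (‖z‖)^2 = (x - y)^2 + d y^2 := by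
      rw [Complex.sq_norm, Complex.normSq_apply, hzre, hzim]; ring
    have habs : ‖z‖ = Real.sqrt ((x - y)^2 + d y ^2) := by
      rw [← habs2, Real.sqrt_sq (norm_nonneg _)]
    have hzpos : 0 < ‖z‖ := by
      rw [habs]
      apply Real.sqrt_pos.mpr
      positivity
    have hwim : |(z⁻¹).im| = d y / (‖z‖)^2 := by
      rw [Complex.inv_im, hzim, Complex.normSq_eq_norm_sq]
      rw [abs_div]
      rw [abs_of_nonneg (by rw [neg_neg]; exact hdy'.le)]
      rw [abs_of_nonneg (by positivity : (0:ℝ) ≤ ‖z‖ ^ 2)]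
      ring_nf
    have hW : ‖(z⁻¹)‖ = (‖z‖)⁻¹ := norm_inv _
    rw [← habs]
    calc |(-1:ℝ)^j * j.factorial * ((z⁻¹)^(j+1)).im / d y|
        = (j.factorial : ℝ) * |((z⁻¹)^(j+1)).im| / d y := by
          rw [abs_div, abs_mul, abs_mul, abs_pow, abs_neg, abs_one, one_pow, one_mul,
            Nat.abs_cast, abs_of_pos hdy']
      _ ≤ (j.factorial : ℝ) * ((j+1) * ‖(z⁻¹)‖ ^ j * |(z⁻¹).im|) / d y := by
          gcongr
          exact abs_im_pow_le _ j
      _ = ((j+1).factorial : ℝ) * ((‖z‖) ^ (j+2))⁻¹ := by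
          rw [hW, hwim]
          rw [Nat.factorial_succ]
          push_cast
          have hz0 : ‖z‖ ≠ 0 := hzpos.ne'
          rw [inv_pow]
          field_simp
          ring

lemma Kk_measurable (d : ℝ → ℝ) (hdc : Continuous d) (j : ℕ) (x : ℝ) :
    Measurable (fun y => Kk d j x y) := by
  unfold Kk
  apply Measurable.ite (hdc.measurable (measurableSet_singleton 0))
  · exact (measurable_const.mul (((measurable_const.sub measurable_id).pow_const _).inv))
  · apply Measurable.div _ hdc.measurable
    apply Measurable.mul measurable_const
    apply Complex.measurable_im.comp
    apply Measurable.pow_const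
    apply Measurable.inv
    exact ((Complex.continuous_ofReal.comp (continuous_const.sub continuous_id)).sub
      ((Complex.continuous_ofReal.comp hdc).mul continuous_const)).measurable

lemma Kk_hasDerivAt (d : ℝ → ℝ) (j : ℕ) {x y : ℝ} (hxy : x ≠ y ∨ d y ≠ 0) :
    HasDerivAt (fun t => Kk d j t y) (Kk d (j+1) x y) x := by
  rcases eq_or_ne (d y) 0 with hdy | hdy
  · have hxy' : x - y ≠ 0 := sub_ne_zero.mpr (hxy.resolve_right (by simp [hdy]))
    have h1 : HasDerivAt (fun t : ℝ => t - y) 1 x := (hasDerivAt_id x).sub_const y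
    have h2 : HasDerivAt (fun t : ℝ => (t - y) ^ (j+2))
        ((j+2) * (x - y)^(j+1) * 1) x := by
      simpa using h1.fun_pow (j+2)
    have h3 : HasDerivAt (fun t : ℝ => ((t - y) ^ (j+2))⁻¹)
        (-((j+2) * (x - y)^(j+1) * 1) / ((x - y)^(j+2))^2) x :=
      h2.inv (pow_ne_zero _ hxy')
    have h4 := h3.const_mul ((-1 : ℝ)^j * (j+1).factorial)
    have : (fun t => Kk d j t y) = fun t : ℝ =>
        (-1 : ℝ)^j * (j+1).factorial * ((t - y) ^ (j+2))⁻¹ := by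
      funext t; unfold Kk; rw [if_pos hdy]
    rw [this]
    convert h4 using 1
    · rfl
    · rfl
    unfold Kk
    rw [if_pos hdy]
    have h5 : (((x - y)^(j+2) : ℝ))^2 = (x - y)^(j+1) * (x - y)^(j+3) := by
      rw [← pow_mul, ← pow_add]
      congr 1
      ring
    rw [h5, Nat.factorial_succ (j+1)]
    have h6 : ((x - y) : ℝ) ^ (j+1) ≠ 0 := pow_ne_zero _ hxy'
    have h7 : ((x - y) : ℝ) ^ (j+3) ≠ 0 := pow_ne_zero _ hxy'
    push_cast
    field_simp
    ring
  · -- complex branch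
    have hzx : ((x:ℂ) - ((y:ℂ) + (d y:ℂ) * Complex.I)) ≠ 0 := by
      intro h0
      apply hdy
      have := congrArg Complex.im h0
      simpa using this
    have h1 : HasDerivAt (fun z : ℂ => (z - ((y:ℂ) + (d y : ℂ) * Complex.I))⁻¹ ^ (j+1))
        ((↑(j+1) : ℂ) * (((x:ℂ) - ((y:ℂ) + (d y:ℂ) * Complex.I))⁻¹) ^ j *
          (-1 / ((x:ℂ) - ((y:ℂ) + (d y:ℂ)*Complex.I)) ^ 2)) ↑x := by
      have hb : HasDerivAt (fun z : ℂ => z - ((y:ℂ) + (d y:ℂ) * Complex.I)) 1 ↑x :=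
        (hasDerivAt_id _).sub_const _
      have hinv := hb.inv hzx
      have hp := hinv.pow (j+1)
      rw [Nat.add_sub_cancel] at hp
      exact hp
    have h4 := h1.comp_ofReal
    have h5 := Complex.imCLM.hasFDerivAt.comp_hasDerivAt x h4
    have h6 := (h5.const_mul ((-1:ℝ)^j * (j.factorial : ℝ))).div_const (d y)
    have hcast : ∀ t : ℝ, ((t - y : ℝ) : ℂ) - (d y : ℂ) * Complex.I
        = (t:ℂ) - ((y:ℂ) + (d y:ℂ) * Complex.I) := by
      intro t
      push_cast
      ring
    have hfun : (fun t : ℝ => Kk d j t y)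
        = fun t : ℝ => (-1:ℝ)^j * (j.factorial:ℝ) *
            (Complex.imCLM ((((t:ℂ) - ((y:ℂ) + (d y:ℂ) * Complex.I))⁻¹) ^ (j+1))) / d y := by
      funext t
      unfold Kk
      rw [if_neg hdy, hcast t]
      simp
    rw [hfun]
    convert h6 using 1
    · rfl
    · rfl
    · rfl
    unfold Kk
    rw [if_neg hdy, hcast x]
    set z : ℂ := (x:ℂ) - ((y:ℂ) + (d y:ℂ) * Complex.I) with hz
    have hw2 : (-1 / z^2 : ℂ) = -(z⁻¹)^2 := by
      rw [inv_pow]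
      ring
    have him : ((↑(j+1):ℂ) * (z⁻¹) ^ j * (-1/z^2)) = -((j:ℂ)+1) * (z⁻¹)^(j+2) := by
      rw [hw2]
      push_cast
      ring
    rw [him]
    have him2 : ((-((j:ℂ)+1)) * (z⁻¹)^(j+2)).im = -((j:ℝ)+1) * ((z⁻¹)^(j+2)).im := by
      simp [Complex.mul_im]
    simp only [Complex.imCLM_apply] at *
    rw [him2]
    rw [Nat.factorial_succ]
    push_cast
    field_simp
    ring

end SmoothProp

namespace SmoothProp

lemma key_int {c : ℝ} (hc : 0 < c) (m : ℕ) (hm : 2 ≤ m) (x : ℝ) :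
    Integrable (fun y => ((max |x - y| c) ^ m)⁻¹) ∧
      ∫ y, ((max |x - y| c) ^ m)⁻¹ ≤ 8 * c / c ^ m := by
  obtain ⟨k, rfl⟩ : ∃ k, m = 2 + k := ⟨m - 2, by omega⟩
  set g0 : ℝ → ℝ := fun y => (2 / c ^ (2+k)) * (1 + ((y - x)/c)^2)⁻¹ with hg0
  have hpt : ∀ y, ((max |x - y| c) ^ (2+k))⁻¹ ≤ g0 y := by
    intro y
    set M := max |x - y| c with hM
    have hM1 : |x - y| ≤ M := le_max_left _ _
    have hM2 : c ≤ M := le_max_right _ _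
    have hMpos : 0 < M := lt_of_lt_of_le hc hM2
    have h1 : c ^ k ≤ M ^ k := pow_le_pow_left₀ hc.le hM2 k
    have h2 : c^2 * (1 + ((y - x)/c)^2) / 2 ≤ M^2 := by
      have e : c^2 * (1 + ((y-x)/c)^2) = c^2 + (y-x)^2 := by field_simp
      rw [e]
      have ha : (y - x)^2 ≤ |x - y|^2 := by
        rw [abs_sub_comm, ← abs_pow]
        exact le_abs_self _
      nlinarith [pow_le_pow_left₀ (abs_nonneg (x-y)) hM1 2]
    have h3 : c^(2+k) * (1 + ((y-x)/c)^2) / 2 ≤ M^(2+k) := by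
      rw [pow_add, pow_add]
      calc c^2 * c^k * (1 + ((y-x)/c)^2) / 2
          = (c^2 * (1 + ((y-x)/c)^2) / 2) * c^k := by ring
        _ ≤ M^2 * M^k := by
            apply mul_le_mul h2 h1 (by positivity) (by positivity)
    have h4 : (0:ℝ) < c^(2+k) * (1 + ((y-x)/c)^2) / 2 := by positivity
    calc (M ^ (2+k))⁻¹ ≤ (c^(2+k) * (1 + ((y-x)/c)^2) / 2)⁻¹ := by
          apply inv_anti₀ h4 h3
      _ = g0 y := by
          rw [hg0]
          dsimp
          have ha : (c:ℝ)^(2+k) ≠ 0 := by positivity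
          have hb : (1 + ((y - x) / c) ^ 2) ≠ 0 := by positivity
          field_simp
  have hint0 : Integrable (fun y : ℝ => (1 + ((y - x)/c)^2)⁻¹) := by
    have h1 : Integrable (fun t : ℝ => (1 + (t/c)^2)⁻¹) := by
      have := integrable_inv_one_add_sq.comp_div (ne_of_gt hc)
      simpa using this
    have h2 := h1.comp_sub_right x
    simpa using h2
  have hintg0 : Integrable g0 := hint0.const_mul _
  have hmeas : AEStronglyMeasurable (fun y => ((max |x - y| c) ^ (2+k))⁻¹) volume := by
    apply Continuous.aestronglyMeasurable
    have hcont : Continuous fun y : ℝ => max |x - y| c :=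
      ((continuous_const.sub continuous_id).abs).max continuous_const
    exact (hcont.pow _).inv₀ fun y => (pow_pos (lt_of_lt_of_le hc (le_max_right _ _)) _).ne'
  have hintf : Integrable (fun y => ((max |x - y| c) ^ (2+k))⁻¹) := by
    apply Integrable.mono' hintg0 hmeas
    filter_upwards with y
    rw [Real.norm_eq_abs, abs_of_nonneg (by positivity)]
    exact hpt y
  refine ⟨hintf, ?_⟩
  have hval : ∫ y, (1 + ((y - x)/c)^2)⁻¹ = |c| * π := by
    have h1 : (∫ y : ℝ, (1 + ((y - x)/c)^2)⁻¹) = ∫ y : ℝ, (1 + (y/c)^2)⁻¹ := by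
      have := integral_sub_right_eq_self (μ := volume) (fun t : ℝ => (1 + (t/c)^2)⁻¹) x
      simpa using this
    rw [h1]
    have h2 := MeasureTheory.Measure.integral_comp_div (fun t : ℝ => (1 + t^2)⁻¹) c
    simp only [smul_eq_mul] at h2
    rw [h2, integral_univ_inv_one_add_sq]
  calc (∫ y, ((max |x - y| c) ^ (2+k))⁻¹) ≤ ∫ y, g0 y := integral_mono hintf hintg0 hpt
    _ = (2 / c^(2+k)) * ∫ y, (1 + ((y - x)/c)^2)⁻¹ := by
        rw [hg0]
        exact integral_const_mul _ _
    _ = (2 / c^(2+k)) * (|c| * π) := by rw [hval]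
    _ ≤ 8 * c / c^(2+k) := by
        rw [abs_of_pos hc]
        have hpi : π ≤ 4 := by
          have := Real.pi_lt_d2
          linarith
        have hcp : (0:ℝ) < c^(2+k) := by positivity
        rw [div_mul_eq_mul_div, mul_comm, div_le_div_iff₀ hcp hcp]
        have : (0:ℝ) ≤ c * c^(2+k) := by positivity
        nlinarith
  
end SmoothProp

namespace SmoothProp

/-- regularized integral -/
def II (d : ℝ → ℝ) (j : ℕ) (x : ℝ) : ℝ := ∫ y, Kk d j x y

section IIlem
set_option linter.unusedSectionVars false

variable {d : ℝ → ℝ} (hdl : ∀ x y, d x ≤ d y + 8 * |x - y|) (hd0 : ∀ y, 0 ≤ d y)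
  (hdc : Continuous d)

include hdl hd0 hdc

lemma sqrtD_lower {x : ℝ} (hx : 0 < d x) (y : ℝ) :
    max |x - y| (d x / 16) ≤ Real.sqrt ((x - y)^2 + d y^2) := by
  have h1 : |x - y| ≤ Real.sqrt ((x - y)^2 + d y^2) := by
    rw [← Real.sqrt_sq_eq_abs]
    apply Real.sqrt_le_sqrt
    nlinarith [sq_nonneg (d y)]
  rcases le_or_gt (d x / 16) (|x - y|) with hc | hc
  · exact max_le h1 (hc.trans h1)
  · apply max_le h1
    have h2 : d x / 2 ≤ d y := by
      have := hdl x y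
      linarith
    calc d x / 16 ≤ d y := by linarith
      _ = Real.sqrt (d y^2) := (Real.sqrt_sq (by linarith)).symm
      _ ≤ _ := Real.sqrt_le_sqrt (by nlinarith [sq_nonneg (x - y)])

lemma Kk_abs_le' {x : ℝ} (hx : 0 < d x) (j : ℕ) (y : ℝ) :
    |Kk d j x y| ≤ (j+1).factorial * ((max |x - y| (d x / 16)) ^ (j+2))⁻¹ := by
  refine (Kk_abs_le d hd0 j x y).trans ?_
  have h := sqrtD_lower hdl hd0 hdc hx y
  have hmax : (0:ℝ) < max |x - y| (d x / 16) :=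
    lt_of_lt_of_le (by linarith) (le_max_right _ _)
  have hpow : (max |x - y| (d x / 16)) ^ (j+2) ≤ (Real.sqrt ((x - y)^2 + d y^2)) ^ (j+2) :=
    pow_le_pow_left₀ hmax.le h _
  exact mul_le_mul_of_nonneg_left (inv_anti₀ (by positivity) hpow) (by positivity)

lemma integrable_Kk {x : ℝ} (hx : 0 < d x) (j : ℕ) :
    Integrable (fun y => Kk d j x y) := by
  have hc : (0:ℝ) < d x / 16 := by linarith
  have key := key_int hc (j+2) (by omega) x
  apply Integrable.mono' (key.1.const_mul ((j+1).factorial : ℝ))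
    ((Kk_measurable d hdc j x).aestronglyMeasurable)
  filter_upwards with y
  rw [Real.norm_eq_abs]
  exact Kk_abs_le' hdl hd0 hdc hx j y

/-- universal bounds for the derivatives of the regularized integral -/
def Bc (j : ℕ) : ℝ := 8 * (j+1).factorial * 16^(j+1)

lemma Bc_nonneg (j : ℕ) : 0 ≤ Bc j := by
  unfold Bc
  positivity

lemma abs_II_le {x : ℝ} (hx : 0 < d x) (j : ℕ) : |II d j x| ≤ Bc j / d x ^ (j+1) := by
  have hc : (0:ℝ) < d x / 16 := by linarith
  have key := key_int hc (j+2) (by omega) x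
  have h1 : |II d j x| ≤ ∫ y, ((j+1).factorial : ℝ) * ((max |x - y| (d x / 16)) ^ (j+2))⁻¹ := by
    unfold II
    calc |∫ y, Kk d j x y| ≤ ∫ y, |Kk d j x y| := by
          simpa [Real.norm_eq_abs] using
            norm_integral_le_integral_norm (μ := volume) (fun y => Kk d j x y)
      _ ≤ _ := by
          apply integral_mono ((integrable_Kk hdl hd0 hdc hx j).abs) (key.1.const_mul _)
          intro y
          exact Kk_abs_le' hdl hd0 hdc hx j y
  rw [integral_const_mul] at h1
  have h2 : ((j+1).factorial : ℝ) * ∫ y, ((max |x - y| (d x / 16)) ^ (j+2))⁻¹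
      ≤ ((j+1).factorial : ℝ) * (8 * (d x / 16) / (d x / 16) ^ (j+2)) := by
    apply mul_le_mul_of_nonneg_left key.2 (by positivity)
  have h3 : ((j+1).factorial : ℝ) * (8 * (d x / 16) / (d x / 16) ^ (j+2))
      = Bc j / d x ^ (j+1) := by
    unfold Bc
    rw [pow_succ]
    have hd16 : (d x / 16 : ℝ) ≠ 0 := ne_of_gt hc
    have h4 : ((d x / 16 : ℝ)) ^ (j+1) ≠ 0 := pow_ne_zero _ hd16
    rw [div_pow]
    have h5 : (16:ℝ)^(j+1) ≠ 0 := by positivity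
    have h6 : (d x)^(j+1) ≠ 0 := by positivity
    field_simp
  linarith

lemma hasDerivAt_II {x₀ : ℝ} (hx : 0 < d x₀) (j : ℕ) :
    HasDerivAt (II d j) (II d (j+1) x₀) x₀ := by
  set ρ := d x₀ / 32 with hρ
  set c' := 3 * d x₀ / 64 with hc'
  have hρpos : 0 < ρ := by rw [hρ]; linarith
  have hc'pos : 0 < c' := by rw [hc']; linarith
  have hdx : ∀ x ∈ Metric.ball x₀ ρ, 3/4 * d x₀ ≤ d x := by
    intro x hxb
    rw [Metric.mem_ball, Real.dist_eq] at hxb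
    have := hdl x₀ x
    rw [abs_sub_comm] at hxb
    linarith
  have hdxpos : ∀ x ∈ Metric.ball x₀ ρ, 0 < d x := fun x hxb => by
    have := hdx x hxb; linarith
  have maxineq : ∀ x ∈ Metric.ball x₀ ρ, ∀ y : ℝ,
      3/5 * max |x₀ - y| c' ≤ max |x - y| (d x / 16) := by
    intro x hxb y
    have hb : |x - x₀| < ρ := by
      rw [Metric.mem_ball, Real.dist_eq] at hxb; exact hxb
    have ht' : |x₀ - y| - ρ ≤ |x - y| := by
      have := abs_sub_le x₀ x y
      have h2 : |x₀ - x| < ρ := by rwa [abs_sub_comm]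
      linarith
    have hc2 : c' ≤ d x / 16 := by
      have := hdx x hxb
      rw [hc']
      linarith
    rcases le_or_gt (3/5 * max |x₀ - y| c') (d x / 16) with hcase | hcase
    · exact le_max_of_le_right hcase
    · have hmaxt : max |x₀ - y| c' = |x₀ - y| := by
        rcases max_cases |x₀ - y| c' with ⟨h, _⟩ | ⟨h, hlt⟩
        · exact h
        · exfalso
          rw [h] at hcase
          linarith
      rw [hmaxt] at hcase ⊢
      have htbig : 5/64 * d x₀ ≤ |x₀ - y| := by
        rw [hc'] at hc2
        nlinarith
      apply le_max_of_le_left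
      rw [hρ] at ht' hb
      linarith
  apply (hasDerivAt_integral_of_dominated_loc_of_deriv_le (F := fun x y => Kk d j x y)
    (F' := fun x y => Kk d (j+1) x y)
    (bound := fun y => ((j+2).factorial : ℝ) * (5/3)^(j+3) * ((max |x₀ - y| c') ^ (j+3))⁻¹)
    (Metric.ball_mem_nhds x₀ hρpos) ?_ ?_ ?_ ?_ ?_ ?_).2
  · filter_upwards with x
    exact (Kk_measurable d hdc j x).aestronglyMeasurable
  · exact integrable_Kk hdl hd0 hdc hx j
  · exact (Kk_measurable d hdc (j+1) x₀).aestronglyMeasurable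
  · filter_upwards with y
    intro x hxb
    rw [Real.norm_eq_abs]
    have h1 := Kk_abs_le' hdl hd0 hdc (hdxpos x hxb) (j+1) y
    refine h1.trans ?_
    have h2 := maxineq x hxb y
    have h3 : ((max |x - y| (d x / 16)) ^ (j+3))⁻¹ ≤ ((3/5 * max |x₀ - y| c') ^ (j+3))⁻¹ := by
      apply inv_anti₀ (by positivity)
      exact pow_le_pow_left₀ (by positivity) h2 _
    calc ((j+1+1).factorial : ℝ) * ((max |x - y| (d x / 16)) ^ (j+1+2))⁻¹
        ≤ ((j+2).factorial : ℝ) * ((3/5 * max |x₀ - y| c') ^ (j+3))⁻¹ := by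
          have : (j+1+2) = j+3 := by omega
          rw [this]
          have : (j+1+1) = j+2 := by omega
          rw [this]
          apply mul_le_mul_of_nonneg_left h3 (by positivity)
      _ = ((j+2).factorial : ℝ) * (5/3)^(j+3) * ((max |x₀ - y| c') ^ (j+3))⁻¹ := by
          rw [mul_pow, mul_inv, mul_assoc]
          congr 2
          rw [← inv_pow]
          norm_num
  · apply Integrable.const_mul
    exact (key_int hc'pos (j+3) (by omega) x₀).1
  · filter_upwards with y
    intro x hxb
    apply Kk_hasDerivAt
    rcases eq_or_ne (d y) 0 with hdy | hdy
    · left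
      intro hxy
      have := hdl x y
      rw [hxy] at this
      simp [hdy] at this
      have := hdxpos x hxb
      rw [hxy] at this
      linarith
    · right; exact hdy

end IIlem
end SmoothProp

namespace SmoothProp
section IIlem2
set_option linter.unusedSectionVars false

variable {d : ℝ → ℝ} (hdl : ∀ x y, d x ≤ d y + 8 * |x - y|) (hd0 : ∀ y, 0 ≤ d y)
  (hdc : Continuous d)

include hdl hd0 hdc

lemma Vopen : IsOpen {x : ℝ | 0 < d x} := isOpen_lt continuous_const hdc

lemma contDiffOn_II (n : ℕ) : ∀ j : ℕ, ContDiffOn ℝ n (II d j) {x : ℝ | 0 < d x} := by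
  induction n with
  | zero =>
    intro j
    rw [show ((0:ℕ) : WithTop ℕ∞) = 0 from rfl, contDiffOn_zero]
    intro x hx
    exact ((hasDerivAt_II hdl hd0 hdc hx j).continuousAt).continuousWithinAt
  | succ n ih =>
    intro j
    rw [show ((n+1 : ℕ) : WithTop ℕ∞) = (n : WithTop ℕ∞) + 1 by push_cast; rfl]
    rw [contDiffOn_succ_iff_deriv_of_isOpen (Vopen hdl hd0 hdc)]
    refine ⟨?_, ?_, ?_⟩
    · intro x hx
      exact (hasDerivAt_II hdl hd0 hdc hx j).differentiableAt.differentiableWithinAt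
    · intro hω
      exfalso
      exact (WithTop.natCast_ne_top n) hω
    · apply (ih (j+1)).congr
      intro x hx
      exact (hasDerivAt_II hdl hd0 hdc hx j).deriv

lemma contDiffOn_II_top (j : ℕ) : ContDiffOn ℝ (⊤ : ℕ∞) (II d j) {x : ℝ | 0 < d x} := by
  rw [contDiffOn_infty]
  exact fun n => contDiffOn_II hdl hd0 hdc n j

lemma II0_lower {x : ℝ} (hx : 0 < d x) : (24 * d x)⁻¹ ≤ II d 0 x := by
  set r := d x / 16 with hr
  have hrpos : 0 < r := by rw [hr]; linarith
  have hK0 : ∀ y, Kk d 0 x y = ((x - y)^2 + d y^2)⁻¹ := fun y => Kk_zero d x y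
  set s : Set ℝ := Icc (x - r) (x + r) with hs
  have hsub : ∀ y ∈ s, (3 * d x ^ 2)⁻¹ ≤ Kk d 0 x y := by
    intro y hy
    rw [hK0]
    have hpos : 0 < (x - y)^2 + d y^2 := by
      rcases eq_or_ne y x with hcc | hcc
      · subst hcc; nlinarith
      · have h5 : (x - y) ≠ 0 := sub_ne_zero.mpr (Ne.symm hcc)
        have h6 : 0 < (x - y)^2 := by positivity
        nlinarith [sq_nonneg (d y)]
    apply inv_anti₀ hpos
    obtain ⟨hy1, hy2⟩ := hy
    have hxy : |x - y| ≤ r := by rw [abs_le]; constructor <;> linarith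
    have h1 : (x - y)^2 ≤ r^2 := by nlinarith [abs_nonneg (x - y), sq_abs (x - y), pow_le_pow_left₀ (abs_nonneg (x-y)) hxy 2]
    have h2 : d y ≤ 3/2 * d x := by
      have := hdl y x
      rw [abs_sub_comm] at this
      linarith
    have h3 : d y ^ 2 ≤ 9/4 * d x^2 := by nlinarith [hd0 y]
    rw [hr] at h1
    nlinarith
  have hvol : volume s = ENNReal.ofReal (2 * r) := by
    rw [hs, Real.volume_Icc]
    congr 1
    ring
  have hint : Integrable (fun y => Kk d 0 x y) := integrable_Kk hdl hd0 hdc hx 0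
  have h1 : (3 * d x ^ 2)⁻¹ * (volume s).toReal ≤ ∫ y in s, Kk d 0 x y :=
    setIntegral_ge_of_const_le_real measurableSet_Icc
      (by rw [hvol]; exact ENNReal.ofReal_ne_top) hsub hint.integrableOn
  have h2 : ∫ y in s, Kk d 0 x y ≤ II d 0 x := by
    apply setIntegral_le_integral hint
    filter_upwards with y
    rw [hK0]
    positivity
  have h3 : (volume s).toReal = 2 * r := by
    rw [hvol, ENNReal.toReal_ofReal (by positivity)]
  rw [h3] at h1
  have h4 : (24 * d x)⁻¹ ≤ (3 * d x ^ 2)⁻¹ * (2 * r) := by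
    apply le_of_eq
    have hdx : d x ≠ 0 := ne_of_gt hx
    rw [hr]
    field_simp
    ring
  linarith

end IIlem2
end SmoothProp

namespace SmoothProp

/-- recursive universal constants -/
def AAp : ℕ → ℝ × ℝ
  | 0 => (24, 24)
  | (n+1) =>
      ((4:ℝ)^n * (∑ i ∈ Finset.range (n+1), Bc (i+1)) * (AAp n).2^2,
       (AAp n).2 + (4:ℝ)^n * (∑ i ∈ Finset.range (n+1), Bc (i+1)) * (AAp n).2^2)

def AA (n : ℕ) : ℝ := (AAp n).1

lemma AAp_nonneg (n : ℕ) : 0 ≤ (AAp n).1 ∧ 0 ≤ (AAp n).2 := by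
  induction n with
  | zero => norm_num [AAp]
  | succ n ih =>
    have hB : 0 ≤ ∑ i ∈ Finset.range (n+1), Bc (i+1) :=
      Finset.sum_nonneg fun i _ => by unfold Bc; positivity
    have h1 : 0 ≤ (4:ℝ)^n * (∑ i ∈ Finset.range (n+1), Bc (i+1)) * (AAp n).2^2 := by
      positivity
    exact ⟨h1, by simp only [AAp]; linarith [ih.2]⟩

lemma AA_nonneg (n : ℕ) : 0 ≤ AA n := (AAp_nonneg n).1

lemma AA_sum (n : ℕ) : ∑ k ∈ Finset.range (n+1), AA k = (AAp n).2 := by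
  induction n with
  | zero => simp [AA, AAp]
  | succ n ih =>
    rw [Finset.sum_range_succ, ih]
    simp only [AA, AAp]

lemma AA_succ (n : ℕ) : AA (n+1)
    = 4^n * (∑ i ∈ Finset.range (n+1), Bc (i+1)) * ((AAp n).2)^2 := rfl

lemma AA_le_sum {k n : ℕ} (hk : k ≤ n) : AA k ≤ (AAp n).2 := by
  rw [← AA_sum]
  apply Finset.single_le_sum (fun i _ => AA_nonneg i) (Finset.mem_range.mpr (by omega))

/-- the smooth function: reciprocal of the regularized integral -/
def gg (d : ℝ → ℝ) (x : ℝ) : ℝ := (II d 0 x)⁻¹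

section GGlem
set_option linter.unusedSectionVars false

variable {d : ℝ → ℝ} (hdl : ∀ x y, d x ≤ d y + 8 * |x - y|) (hd0 : ∀ y, 0 ≤ d y)
  (hdc : Continuous d)

include hdl hd0 hdc

lemma II0_pos {x : ℝ} (hx : 0 < d x) : 0 < II d 0 x :=
  lt_of_lt_of_le (by positivity) (II0_lower hdl hd0 hdc hx)

lemma gg_pos {x : ℝ} (hx : 0 < d x) : 0 < gg d x := by
  unfold gg
  exact inv_pos.mpr (II0_pos hdl hd0 hdc hx)

lemma gg_le {x : ℝ} (hx : 0 < d x) : gg d x ≤ 24 * d x := by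
  unfold gg
  have h1 := II0_lower hdl hd0 hdc hx
  have h2 : (0:ℝ) < (24 * d x)⁻¹ := by positivity
  calc (II d 0 x)⁻¹ ≤ ((24 * d x)⁻¹)⁻¹ := inv_anti₀ h2 h1
    _ = 24 * d x := inv_inv _

lemma gg_ge {x : ℝ} (hx : 0 < d x) : d x / 128 ≤ gg d x := by
  unfold gg
  have h1 : II d 0 x ≤ 128 / d x := by
    have := abs_II_le hdl hd0 hdc hx 0
    have hB : Bc 0 = 128 := by unfold Bc; norm_num
    rw [hB, pow_one] at this
    calc II d 0 x ≤ |II d 0 x| := le_abs_self _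
      _ ≤ 128 / d x := this
  calc d x / 128 = (128 / d x)⁻¹ := by rw [inv_div]
    _ ≤ (II d 0 x)⁻¹ := inv_anti₀ (II0_pos hdl hd0 hdc hx) h1

lemma gg_contDiffOn : ContDiffOn ℝ (⊤ : ℕ∞) (gg d) {x : ℝ | 0 < d x} :=
  (contDiffOn_II_top hdl hd0 hdc 0).inv fun x hx => ne_of_gt (II0_pos hdl hd0 hdc hx)

lemma gg_hasDerivAt {x : ℝ} (hx : 0 < d x) :
    HasDerivAt (gg d) (-(II d 1 x * (gg d x * gg d x))) x := by
  have h := (hasDerivAt_II hdl hd0 hdc hx 0).inv (ne_of_gt (II0_pos hdl hd0 hdc hx))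
  convert h using 1
  · rfl
  · rfl
  · rfl
  unfold gg
  have hne : II d 0 x ≠ 0 := ne_of_gt (II0_pos hdl hd0 hdc hx)
  have hsq : (II d 0 x)⁻¹ * (II d 0 x)⁻¹ = (II d 0 x ^ 2)⁻¹ := by rw [← mul_inv, sq]
  rw [hsq, div_eq_mul_inv, neg_mul]

lemma iDW_II (a : ℕ) : ∀ (j : ℕ), ∀ x ∈ {x : ℝ | 0 < d x},
    iteratedDerivWithin a (II d j) {x : ℝ | 0 < d x} x = II d (j+a) x := by
  induction a with
  | zero => intro j x hx; simp
  | succ a ih =>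
    intro j x hx
    rw [iteratedDerivWithin_succ']
    have hEq : Set.EqOn (derivWithin (II d j) {x : ℝ | 0 < d x}) (II d (j+1))
        {x : ℝ | 0 < d x} := by
      intro z hz
      rw [derivWithin_of_isOpen (Vopen hdl hd0 hdc) hz]
      exact (hasDerivAt_II hdl hd0 hdc hz j).deriv
    rw [iteratedDerivWithin_congr hEq hx]
    rw [ih (j+1) x hx]
    congr 1
    omega

lemma normFDW_II {x : ℝ} (hx : x ∈ {x : ℝ | 0 < d x}) (a j : ℕ) :
    ‖iteratedFDerivWithin ℝ a (II d j) {x : ℝ | 0 < d x} x‖ = |II d (j+a) x| := by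
  rw [norm_iteratedFDerivWithin_eq_norm_iteratedDerivWithin, Real.norm_eq_abs,
    iDW_II hdl hd0 hdc a j x hx]

lemma gg_bound_mul : ∀ n : ℕ, ∀ x ∈ {x : ℝ | 0 < d x},
    ‖iteratedFDerivWithin ℝ n (gg d) {x : ℝ | 0 < d x} x‖ * d x ^ n ≤ AA n * d x := by
  intro n
  induction n using Nat.strong_induction_on with
  | _ n IH =>
    match n with
    | 0 =>
      intro x hx
      rw [norm_iteratedFDerivWithin_zero, pow_zero, mul_one, Real.norm_eq_abs,
        abs_of_pos (gg_pos hdl hd0 hdc hx)]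
      have h24 : AA 0 = 24 := rfl
      rw [h24]
      exact gg_le hdl hd0 hdc hx
    | (n+1) =>
      intro x hx
      have hxd : 0 < d x := hx
      have hV : UniqueDiffOn ℝ {x : ℝ | 0 < d x} := (Vopen hdl hd0 hdc).uniqueDiffOn
      have hle : ∀ m : ℕ, (m : WithTop ℕ∞) ≤ ((⊤:ℕ∞) : WithTop ℕ∞) := by
        intro m
        exact_mod_cast le_top
      have hggC : ∀ m : ℕ, ContDiffOn ℝ m (gg d) {x : ℝ | 0 < d x} :=
        fun m => (gg_contDiffOn hdl hd0 hdc).of_le (hle m)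
      rw [norm_iteratedFDerivWithin_eq_norm_iteratedDerivWithin, Real.norm_eq_abs,
        iteratedDerivWithin_succ']
      have hEq : Set.EqOn (derivWithin (gg d) {x : ℝ | 0 < d x})
          (fun z => -(II d 1 z * (gg d z * gg d z))) {x : ℝ | 0 < d x} := by
        intro z hz
        rw [derivWithin_of_isOpen (Vopen hdl hd0 hdc) hz]
        exact (gg_hasDerivAt hdl hd0 hdc hz).deriv
      rw [iteratedDerivWithin_congr hEq hx]
      rw [iteratedDerivWithin_fun_neg (fun z => II d 1 z * (gg d z * gg d z)), abs_neg, ← Real.norm_eq_abs,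
        ← norm_iteratedFDerivWithin_eq_norm_iteratedDerivWithin]
      set S := (AAp n).2 with hS
      have hSnn : 0 ≤ S := (AAp_nonneg n).2
      have hF : ContDiffOn ℝ (n : WithTop ℕ∞) (II d 1) {x : ℝ | 0 < d x} :=
        contDiffOn_II hdl hd0 hdc n 1
      have hG : ContDiffOn ℝ (n : WithTop ℕ∞) (fun z => gg d z * gg d z)
          {x : ℝ | 0 < d x} := (hggC n).mul (hggC n)
      have hmul := norm_iteratedFDerivWithin_mul_le (𝕜 := ℝ) hF hG hV hx
        (le_refl (n : WithTop ℕ∞))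
      have hchoose : ∀ (m i : ℕ), i ≤ m → m ≤ n → ((m.choose i : ℕ) : ℝ) ≤ 2^n := by
        intro m i hi hm
        have h1 : m.choose i ≤ 2^m := by
          calc m.choose i ≤ ∑ j ∈ Finset.range (m+1), m.choose j :=
              Finset.single_le_sum (fun k _ => Nat.zero_le _) (Finset.mem_range.mpr (by omega))
            _ = 2^m := Nat.sum_range_choose m
        have h2 : (2:ℕ)^m ≤ 2^n := Nat.pow_le_pow_right (by norm_num) hm
        exact_mod_cast h1.trans h2
      have hgbd : ∀ l : ℕ, l ≤ n →
          ‖iteratedFDerivWithin ℝ l (gg d) {x : ℝ | 0 < d x} x‖ * d x ^ l ≤ AA l * d x :=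
        fun l hl => IH l (by omega) x hx
      have hInner : ∀ m : ℕ, m ≤ n →
          ‖iteratedFDerivWithin ℝ m (fun z => gg d z * gg d z) {x : ℝ | 0 < d x} x‖ * d x ^ m
            ≤ 2^n * S^2 * d x^2 := by
        intro m hm
        have hmulG := norm_iteratedFDerivWithin_mul_le (𝕜 := ℝ) (hggC m) (hggC m) hV hx
          (le_refl (m : WithTop ℕ∞))
        calc ‖iteratedFDerivWithin ℝ m (fun z => gg d z * gg d z) {x : ℝ | 0 < d x} x‖
              * d x ^ m
            ≤ (∑ l ∈ Finset.range (m+1), ((m.choose l : ℕ) : ℝ)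
                * ‖iteratedFDerivWithin ℝ l (gg d) {x : ℝ | 0 < d x} x‖
                * ‖iteratedFDerivWithin ℝ (m-l) (gg d) {x : ℝ | 0 < d x} x‖) * d x ^ m := by
              apply mul_le_mul_of_nonneg_right hmulG (by positivity)
          _ = ∑ l ∈ Finset.range (m+1), ((m.choose l : ℕ) : ℝ)
                * (‖iteratedFDerivWithin ℝ l (gg d) {x : ℝ | 0 < d x} x‖ * d x ^ l)
                * (‖iteratedFDerivWithin ℝ (m-l) (gg d) {x : ℝ | 0 < d x} x‖ * d x ^ (m-l)) := by
              rw [Finset.sum_mul]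
              apply Finset.sum_congr rfl
              intro l hl
              have hlm : l ≤ m := by
                have := Finset.mem_range.mp hl; omega
              have hpow : d x ^ m = d x ^ l * d x ^ (m - l) := by
                rw [← pow_add]; congr 1; omega
              rw [hpow]; ring
          _ ≤ ∑ l ∈ Finset.range (m+1), ((m.choose l : ℕ) : ℝ) * (AA l * d x) * (AA (m-l) * d x) := by
              apply Finset.sum_le_sum
              intro l hl
              have hlm : l ≤ m := by have := Finset.mem_range.mp hl; omega
              have h1 := hgbd l (by omega)
              have h2 := hgbd (m - l) (by omega)
              have hnn1 : (0:ℝ) ≤ ((m.choose l : ℕ) : ℝ) := by positivity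
              apply mul_le_mul (mul_le_mul_of_nonneg_left h1 hnn1) h2
                (mul_nonneg (norm_nonneg _) (by positivity))
                (mul_nonneg hnn1 (mul_nonneg (AA_nonneg _) hxd.le))
          _ ≤ ∑ l ∈ Finset.range (m+1), (2:ℝ)^n * (AA l * d x) * (S * d x) := by
              apply Finset.sum_le_sum
              intro l hl
              have hlm : l ≤ m := by have := Finset.mem_range.mp hl; omega
              have hc := hchoose m l hlm hm
              have hAS : AA (m-l) ≤ S := AA_le_sum (by omega)
              apply mul_le_mul
              · apply mul_le_mul_of_nonneg_right hc (mul_nonneg (AA_nonneg _) hxd.le)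
              · apply mul_le_mul_of_nonneg_right hAS (le_of_lt hxd)
              · exact mul_nonneg (AA_nonneg _) hxd.le
              · exact mul_nonneg (by positivity) (mul_nonneg (AA_nonneg _) hxd.le)
          _ = ∑ l ∈ Finset.range (m+1), AA l * ((2:ℝ)^n * S * d x^2) :=
              Finset.sum_congr rfl (fun l _ => by ring)
          _ = (∑ l ∈ Finset.range (m+1), AA l) * ((2:ℝ)^n * S * d x^2) :=
              (Finset.sum_mul _ _ _).symm
          _ ≤ S * ((2:ℝ)^n * S * d x^2) := by
              apply mul_le_mul_of_nonneg_right _ (by positivity)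
              calc ∑ l ∈ Finset.range (m+1), AA l
                  ≤ ∑ l ∈ Finset.range (n+1), AA l :=
                    Finset.sum_le_sum_of_subset_of_nonneg
                      (Finset.range_subset_range.mpr (by omega)) (fun i _ _ => AA_nonneg i)
                _ = S := AA_sum n
          _ = 2^n * S^2 * d x^2 := by ring
      have key : ‖iteratedFDerivWithin ℝ n (fun z => II d 1 z * (gg d z * gg d z))
          {x : ℝ | 0 < d x} x‖ * d x ^ (n+2) ≤ AA (n+1) * d x^2 := by
        calc ‖iteratedFDerivWithin ℝ n (fun z => II d 1 z * (gg d z * gg d z))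
              {x : ℝ | 0 < d x} x‖ * d x ^ (n+2)
            ≤ (∑ i ∈ Finset.range (n+1), ((n.choose i : ℕ) : ℝ)
                * ‖iteratedFDerivWithin ℝ i (II d 1) {x : ℝ | 0 < d x} x‖
                * ‖iteratedFDerivWithin ℝ (n-i) (fun z => gg d z * gg d z)
                    {x : ℝ | 0 < d x} x‖) * d x ^ (n+2) := by
              apply mul_le_mul_of_nonneg_right hmul (by positivity)
          _ = ∑ i ∈ Finset.range (n+1), ((n.choose i : ℕ) : ℝ)
                * (‖iteratedFDerivWithin ℝ i (II d 1) {x : ℝ | 0 < d x} x‖ * d x ^ (i+2))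
                * (‖iteratedFDerivWithin ℝ (n-i) (fun z => gg d z * gg d z)
                    {x : ℝ | 0 < d x} x‖ * d x ^ (n-i)) := by
              rw [Finset.sum_mul]
              apply Finset.sum_congr rfl
              intro i hi
              have hin : i ≤ n := by have := Finset.mem_range.mp hi; omega
              have hpow : d x ^ (n+2) = d x ^ (i+2) * d x ^ (n-i) := by
                rw [← pow_add]; congr 1; omega
              rw [hpow]; ring
          _ ≤ ∑ i ∈ Finset.range (n+1), (2:ℝ)^n * Bc (i+1) * (2^n * S^2 * d x^2) := by
              apply Finset.sum_le_sum
              intro i hi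
              have hin : i ≤ n := by have := Finset.mem_range.mp hi; omega
              have ha : ‖iteratedFDerivWithin ℝ i (II d 1) {x : ℝ | 0 < d x} x‖ * d x ^ (i+2)
                  ≤ Bc (i+1) := by
                rw [normFDW_II hdl hd0 hdc hx i 1]
                have habs := abs_II_le hdl hd0 hdc hxd (1+i)
                rw [show (1+i)+1 = i+2 by omega, show (1+i) = i+1 by omega] at habs
                calc |II d (1+i) x| * d x ^ (i+2)
                    ≤ (Bc (i+1) / d x ^ (i+2)) * d x ^ (i+2) := by
                      apply mul_le_mul_of_nonneg_right _ (by positivity)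
                      rw [show (1+i) = i+1 by omega]
                      exact habs
                  _ = Bc (i+1) := div_mul_cancel₀ _ (by positivity)
              have hb := hInner (n-i) (by omega)
              have hcc := hchoose n i hin (le_refl n)
              have hBnn : (0:ℝ) ≤ Bc (i+1) := by unfold Bc; positivity
              apply mul_le_mul (mul_le_mul hcc ha (by positivity) (by positivity)) hb
                (by positivity) (by positivity)
          _ = ∑ i ∈ Finset.range (n+1), Bc (i+1) * ((2:ℝ)^n * 2^n * S^2 * d x^2) :=
              Finset.sum_congr rfl (fun i _ => by ring)
          _ = (∑ i ∈ Finset.range (n+1), Bc (i+1)) * ((2:ℝ)^n * 2^n * S^2 * d x^2) :=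
              (Finset.sum_mul _ _ _).symm
          _ = AA (n+1) * d x^2 := by
              rw [AA_succ, ← hS]
              have h4 : (2:ℝ)^n * 2^n = 4^n := by
                rw [← mul_pow]; norm_num
              rw [← h4]
              ring
      rw [show d x^(n+2) = d x^(n+1) * d x from by rw [pow_succ]] at key
      rw [show (AA (n+1) * d x^2 : ℝ) = (AA (n+1) * d x) * d x from by ring] at key
      rw [← mul_assoc] at key
      exact le_of_mul_le_mul_right key hxd

end GGlem
end SmoothProp


open SmoothProp in
/-- **Proposition 2.2.** If `h` has property (L), there is a function `g`, smooth on
`U = {h > 0}`, with `g ≈ h` on `U` and `|g^{(j)}| ≲_j g^{1−j}` on `U`, with all the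
comparability constants universal (independent of `h`). -/
theorem smooth_comparable_of_propertyL :
    ∃ C₀ : ℝ, 1 ≤ C₀ ∧ ∃ C : ℕ → ℝ,
      ∀ h : ℝ → ℝ, PropertyL h →
        ∃ g : ℝ → ℝ,
          ContDiffOn ℝ (⊤ : ℕ∞) g {x : ℝ | 0 < h x} ∧
          (∀ x ∈ {x : ℝ | 0 < h x}, h x / C₀ ≤ g x ∧ g x ≤ C₀ * h x) ∧
          ∀ j : ℕ, 1 ≤ j → ∀ x ∈ {x : ℝ | 0 < h x},
            |iteratedDerivWithin j g {x : ℝ | 0 < h x} x| ≤ C j * g x ^ (1 - (j : ℝ)) := by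
  refine ⟨256, by norm_num, fun j => AA j * 24^j, ?_⟩
  intro h hL
  have hcont : Continuous h := hL.1
  have hnn : ∀ x, 0 ≤ h x := hL.2.1
  set d := dd h with hd
  have hdl : ∀ x y, d x ≤ d y + 8 * |x - y| := fun x y => dd_lip hnn x y
  have hd0 : ∀ y, 0 ≤ d y := fun y => dd_nonneg hnn y
  have hdc : Continuous d := dd_continuous hnn
  have hUopen : IsOpen {x : ℝ | 0 < h x} := isOpen_lt continuous_const hcont
  have hUV : {x : ℝ | 0 < h x} ⊆ {x : ℝ | 0 < d x} := by
    intro x hx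
    have h1 := dd_ge_half hL (hx : 0 < h x)
    show 0 < d x
    have : (0:ℝ) < h x := hx
    linarith
  refine ⟨gg d, ?_, ?_, ?_⟩
  · exact (gg_contDiffOn hdl hd0 hdc).mono hUV
  · intro x hx
    have hhx : 0 < h x := hx
    have hdx : 0 < d x := hUV hx
    have h1 := gg_ge hdl hd0 hdc hdx
    have h2 := gg_le hdl hd0 hdc hdx
    have h3 := dd_ge_half hL hhx
    have h4 := dd_le_self hnn x
    constructor
    · rw [div_le_iff₀ (by norm_num : (0:ℝ) < 256)] at *
      linarith
    · linarith
  · intro j hj x hx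
    have hhx : 0 < h x := hx
    have hdx : 0 < d x := hUV hx
    have hVopen := Vopen hdl hd0 hdc
    have hgg := gg_bound_mul hdl hd0 hdc j x (hUV hx)
    have hgpos := gg_pos hdl hd0 hdc hdx
    have heq : |iteratedDerivWithin j (gg d) {x : ℝ | 0 < h x} x|
        = ‖iteratedFDerivWithin ℝ j (gg d) {x : ℝ | 0 < d x} x‖ := by
      rw [← Real.norm_eq_abs, ← norm_iteratedFDerivWithin_eq_norm_iteratedDerivWithin]
      rw [(iteratedFDerivWithin_of_isOpen (f := gg d) (𝕜 := ℝ) j hUopen) hx,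
        ← (iteratedFDerivWithin_of_isOpen (f := gg d) (𝕜 := ℝ) j hVopen) (hUV hx)]
    obtain ⟨k, rfl⟩ : ∃ k, j = k + 1 := ⟨j - 1, by omega⟩
    rw [heq]
    have hb : ‖iteratedFDerivWithin ℝ (k+1) (gg d) {x : ℝ | 0 < d x} x‖
        ≤ AA (k+1) * d x / d x^(k+1) := by
      rw [le_div_iff₀ (by positivity)]
      exact hgg
    have hrpow : gg d x ^ (1 - ((k+1:ℕ):ℝ)) = (gg d x ^ k)⁻¹ := by
      rw [show (1 - ((k+1:ℕ):ℝ)) = -(k:ℝ) by push_cast; ring]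
      rw [Real.rpow_neg hgpos.le, Real.rpow_natCast]
    rw [hrpow]
    have hstep1 : AA (k+1) * d x / d x^(k+1) = AA (k+1) * (d x^k)⁻¹ := by
      rw [pow_succ]
      have h6 : d x ^ k ≠ 0 := by positivity
      have h7 : d x ≠ 0 := ne_of_gt hdx
      field_simp
    have hgk : gg d x ^ k ≤ 24^k * d x^k := by
      calc gg d x ^ k ≤ (24 * d x)^k :=
          pow_le_pow_left₀ hgpos.le (gg_le hdl hd0 hdc hdx) k
        _ = 24^k * d x^k := mul_pow _ _ _
    have hstep2 : (d x^k)⁻¹ ≤ 24^k * (gg d x ^ k)⁻¹ := by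
      rw [show (24:ℝ)^k * (gg d x ^ k)⁻¹ = (gg d x ^ k / 24^k)⁻¹ by
        rw [inv_div]; rw [div_eq_mul_inv]]
      apply inv_anti₀ (by positivity)
      rw [div_le_iff₀ (by positivity)]
      calc gg d x ^ k ≤ 24^k * d x^k := hgk
        _ = d x ^ k * 24 ^ k := by ring
    calc ‖iteratedFDerivWithin ℝ (k+1) (gg d) {x : ℝ | 0 < d x} x‖
        ≤ AA (k+1) * d x / d x^(k+1) := hb
      _ = AA (k+1) * (d x^k)⁻¹ := hstep1
      _ ≤ AA (k+1) * (24^k * (gg d x ^ k)⁻¹) :=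
          mul_le_mul_of_nonneg_left hstep2 (AA_nonneg _)
      _ ≤ AA (k+1) * 24^(k+1) * (gg d x ^ k)⁻¹ := by
          have h24 : (24:ℝ)^k ≤ 24^(k+1) := by
            apply pow_le_pow_right₀ (by norm_num) (by omega)
          have hginv : (0:ℝ) ≤ (gg d x ^ k)⁻¹ := by positivity
          calc AA (k+1) * (24^k * (gg d x ^ k)⁻¹)
              = (AA (k+1) * 24^k) * (gg d x ^ k)⁻¹ := by ring
            _ ≤ (AA (k+1) * 24^(k+1)) * (gg d x ^ k)⁻¹ := by
                apply mul_le_mul_of_nonneg_right _ hginv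
                exact mul_le_mul_of_nonneg_left h24 (AA_nonneg _)
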